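/- Let ν be an M×N real matrix, R an N×M real matrix, 𝔪 ⊆ {1,…,M} a set of chemicals and 𝔫 ⊆ {1,…,N} a set of reactions such that R(n,m) = 0 for every m ∈ 𝔪 and n ∉ 𝔫 (output-completeness). Let c¹,…,c^{K_s} ∈ ℝ^N be kernel vectors of ν (ν c^α = 0) with c^α(n) = 0 for every n ∉ 𝔫. Suppose η ∈ ℝ^M satisfies η_m = 0 for all m ∉ 𝔪, and there exist ζ₁,…,ζ_{K_s} ∈ ℝ such that for every n ∈ 𝔫: ∑_{m∈𝔪} R(n,m) η_m = ∑_{α=1}^{K_s} ζ_α c^α(n). Then η is a null vector of the Jacobian J = ν ⬝ R, i.e. (ν ⬝ R) η = 0. In particular, if η ≠ 0 then J has a nonzero null vector whose support is contained in the chemical set 𝔪 of the buffering structure. -/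

import Mathlib

open Matrix

/-- if `(𝔪, 𝔫)` is output-complete, the `c^α` are kernel vectors of `ν`
supported in `𝔫`, and `η` is supported in `𝔪` and satisfies, together with coefficients
`ζ`, the null-vector equation of the submatrix `A_Γs` on 𝔫, then `η` is a null vector of
the Jacobian `J = ν * R`. -/
theorem statement12 {M N Ks : ℕ}
    (ν : Matrix (Fin M) (Fin N) ℝ) (R : Matrix (Fin N) (Fin M) ℝ)
    (𝔪 : Finset (Fin M)) (𝔫 : Finset (Fin N))
    (hoc : ∀ m ∈ 𝔪, ∀ n ∉ 𝔫, R n m = 0)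
    (c : Fin Ks → Fin N → ℝ)
    (hker : ∀ α, ν.mulVec (c α) = 0)
    (hsupp : ∀ α, ∀ n ∉ 𝔫, c α n = 0)
    (η : Fin M → ℝ) (hη : ∀ m ∉ 𝔪, η m = 0)
    (ζ : Fin Ks → ℝ)
    (hnull : ∀ n ∈ 𝔫, ∑ m ∈ 𝔪, R n m * η m = ∑ α, ζ α * c α n) :
    (ν * R).mulVec η = 0 := by
  have hR : R.mulVec η = fun n => ∑ α, ζ α * c α n := by
    funext n
    have h1 : R.mulVec η n = ∑ m ∈ 𝔪, R n m * η m := by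
      rw [mulVec, dotProduct]
      rw [← Finset.sum_subset (Finset.subset_univ 𝔪)]
      intro m _ hm
      rw [hη m hm, mul_zero]
    by_cases hn : n ∈ 𝔫
    · rw [h1, hnull n hn]
    · rw [h1]
      rw [Finset.sum_eq_zero fun m hm => by rw [hoc m hm n hn, zero_mul]]
      rw [Finset.sum_eq_zero fun α _ => by rw [hsupp α n hn, mul_zero]]
  rw [← mulVec_mulVec, hR]
  have : (fun n => ∑ α, ζ α * c α n) = ∑ α, ζ α • c α := by
    funext n
    simp [Finset.sum_apply]
  rw [this]
  have h2 : ν *ᵥ ∑ α, ζ α • c α = ∑ α, ζ α • (ν *ᵥ c α) := by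
    rw [← mulVecLin_apply, map_sum]
    simp only [map_smul, mulVecLin_apply]
  rw [h2]
  exact Finset.sum_eq_zero fun α _ => by rw [hker α, smul_zero]
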